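/- Suppose the DAG 𝒟 is homogeneous of type II and its undirected version is connected, i.e., the undirected graph on {1,…,p} with i ~ j iff i ∈ pa(j) or j ∈ pa(i) is connected. Then fa(1) = {1,…,p}; that is, every vertex j with 2 ≤ j ≤ p is a parent of the smallest vertex 1. -/

import Mathlib

noncomputable section

/-- The DAG is transitive: `i ∈ pa(j)` and `j ∈ pa(k)` imply `i ∈ pa(k)`. -/
def DagTransitive {p : ℕ} (pa : Fin p → Finset (Fin p)) : Prop :=
  ∀ i j k : Fin p, i ∈ pa j → j ∈ pa k → i ∈ pa k

/-- Any two distinct children of a common vertex are adjacent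
(no induced subgraph `j ← i → k`). -/
def ChildrenAdjacent {p : ℕ} (pa : Fin p → Finset (Fin p)) : Prop :=
  ∀ i j k : Fin p, i ∈ pa j → i ∈ pa k → j ≠ k → (j ∈ pa k ∨ k ∈ pa j)

/-- The undirected version of the DAG `𝒟`. -/
def ugraph {p : ℕ} (pa : Fin p → Finset (Fin p)) : SimpleGraph (Fin p) where
  Adj i j := i ≠ j ∧ (i ∈ pa j ∨ j ∈ pa i)
  symm := ⟨fun i j h => ⟨h.1.symm, h.2.symm⟩⟩
  loopless := ⟨fun i h => h.1 rfl⟩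

/-- if the DAG is homogeneous of type II and its undirected version is
connected, then every other vertex is a parent of the smallest vertex `1` (here `0 : Fin p`),
i.e. `fa(1) = {1,…,p}`. -/
theorem stmt15 {p : ℕ} (hp : 1 ≤ p) (pa : Fin p → Finset (Fin p))
    (hpa : ∀ i : Fin p, ∀ j ∈ pa i, i < j)
    (htr : DagTransitive pa) (hch : ChildrenAdjacent pa)
    (hconn : (ugraph pa).Connected) :
    ∀ j : Fin p, j ≠ ⟨0, by omega⟩ → j ∈ pa ⟨0, by omega⟩ := by
  have key : ∀ z v : Fin p, (ugraph pa).Walk v z → z.val = 0 → v = z ∨ v ∈ pa z := by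
    intro z v w
    induction w with
    | nil => exact fun _ => Or.inl rfl
    | @cons u b c h _ ih =>
      intro hz0
      have hnopar : ∀ v : Fin p, c ∉ pa v := by
        intro v hv
        have := hpa v c hv
        omega
      rcases ih hz0 with hb | hb
      · subst hb
        rcases h.2 with h1 | h1
        · exact Or.inr h1
        · exact absurd h1 (hnopar u)
      · rcases h.2 with h1 | h1
        · exact Or.inr (htr u b c h1 hb)
        · by_cases huz : u = c
          · exact Or.inl huz
          · rcases hch b c u hb h1 (Ne.symm huz) with h2 | h2
            · exact absurd h2 (hnopar u)
            · exact Or.inr h2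
  intro j hj
  exact (key ⟨0, by omega⟩ j (hconn j ⟨0, by omega⟩).some rfl).resolve_left hj

end
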